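/- If a compact set F ⊂ ℂ consists of M connected components and m₁(F) < ∞, then F can be covered by at most M(6·m₁(F) + 1) closed discs of radius 1. -/

import Mathlib

open Metric MeasureTheory
open scoped ENNReal NNReal

/-- A connected set reaching from the center of a ball to distance `r` has
1-Hausdorff measure at least `r` inside the open ball of radius `r`. -/
lemma measure_ball_inter_ge (K : Set ℂ) (hK : IsPreconnected K) {x y : ℂ}
    (hx : x ∈ K) (hy : y ∈ K) {r : ℝ} (hr : 0 ≤ r) (hxy : r ≤ dist y x) :
    ENNReal.ofReal r ≤ μH[1] (K ∩ ball x r) := by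
  have hsub : Set.Ico (0 : ℝ) r ⊆ (fun z => dist z x) '' (K ∩ ball x r) := by
    intro t ht
    have hIcc : Set.Icc (dist x x) (dist y x) ⊆ (fun z => dist z x) '' K :=
      hK.intermediate_value hx hy ((LipschitzWith.dist_left x).continuous.continuousOn)
    have ht' : t ∈ Set.Icc (dist x x) (dist y x) := by
      simp only [dist_self]
      exact ⟨ht.1, le_trans (le_of_lt ht.2) hxy⟩
    obtain ⟨z, hzK, hzt⟩ := hIcc ht'
    exact ⟨z, ⟨hzK, by simpa [mem_ball, hzt] using ht.2⟩, hzt⟩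
  have h1 : μH[1] (Set.Ico (0:ℝ) r) = ENNReal.ofReal r := by
    rw [MeasureTheory.hausdorffMeasure_real, Real.volume_Ico, sub_zero]
  calc ENNReal.ofReal r = μH[1] (Set.Ico (0:ℝ) r) := h1.symm
    _ ≤ μH[1] ((fun z => dist z x) '' (K ∩ ball x r)) := measure_mono hsub
    _ ≤ (1:ℝ≥0∞) ^ (1:ℝ) * μH[1] (K ∩ ball x r) := by
        simpa using (LipschitzWith.dist_left x).hausdorffMeasure_image_le zero_le_one (K ∩ ball x r)
    _ = μH[1] (K ∩ ball x r) := by simp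

/-- A compact preconnected set of finite `μH[1]` measure can be covered by at most
`6·μH[1](K) + 1` closed balls of radius 1. -/
lemma component_cover (K : Set ℂ) (hKc : IsCompact K) (hK : IsPreconnected K)
    (hKmeas : MeasurableSet K) (hKm : μH[1] K < ⊤) :
    ∃ T : Finset ℂ, (T.card : ℝ) ≤ 6 * (μH[1] K).toReal + 1 ∧
      K ⊆ ⋃ z ∈ T, closedBall z 1 := by
  classical
  -- maximal 1-separated subset of K
  obtain ⟨T, hTmax⟩ := zorn_subset {T : Set ℂ | T ⊆ K ∧ T.Pairwise (fun a b => 1 ≤ dist a b)}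
    (by
      intro ch hch hchain
      refine ⟨⋃₀ ch, ⟨?_, ?_⟩, fun s hs => Set.subset_sUnion_of_mem hs⟩
      · exact Set.sUnion_subset fun s hs => (hch hs).1
      · intro a ha b hb hab
        obtain ⟨s, hs, has⟩ := ha
        obtain ⟨t, ht, hbt⟩ := hb
        rcases hchain.total hs ht with h | h
        · exact (hch ht).2 (h has) hbt hab
        · exact (hch hs).2 has (h hbt) hab)
  obtain ⟨⟨hTK, hTsep⟩, hmax⟩ := hTmax
  -- T covers K with closed balls of radius 1
  have hcov : K ⊆ ⋃ z ∈ T, closedBall z 1 := by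
    intro z hz
    by_contra hzc
    simp only [Set.mem_iUnion, mem_closedBall, not_exists, not_and, not_le] at hzc
    have hzT : z ∉ T := fun h => by have := hzc z h; simp at this; linarith
    have : insert z T ∈ {T : Set ℂ | T ⊆ K ∧ T.Pairwise (fun a b => 1 ≤ dist a b)} := by
      constructor
      · exact Set.insert_subset hz hTK
      · intro a ha b hb hab
        rcases ha with rfl | ha <;> rcases hb with rfl | hb
        · exact absurd rfl hab
        · exact le_of_lt (hzc b hb)
        · exact le_of_lt (by rw [dist_comm]; exact hzc a ha)
        · exact hTsep ha hb hab
    exact hzT (hmax this (Set.subset_insert z T) (Set.mem_insert z T))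
  -- T is finite: inject it into a finite (1/2)-net of K
  have hTfin : T.Finite := by
    obtain ⟨net, hnetfin, hnet⟩ := totallyBounded_iff.mp hKc.totallyBounded (1/2) (by norm_num)
    classical
    have hinj : ∀ a ∈ T, ∃ n ∈ net, a ∈ ball n (1/2) := by
      intro a ha
      simpa using hnet (hTK ha)
    choose! g hg1 hg2 using hinj
    refine Set.Finite.of_finite_image (f := g) (hnetfin.subset ?_) ?_
    · rintro _ ⟨a, ha, rfl⟩; exact hg1 a ha
    · intro a ha b hb hab
      by_contra hne
      have h2 : dist a (g a) < 1/2 := mem_ball.mp (hg2 a ha)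
      have h3 : dist (g b) b < 1/2 := by rw [dist_comm]; exact mem_ball.mp (hg2 b hb)
      have h1 : dist a b ≤ dist a (g a) + dist (g b) b := by
        rw [hab]; exact dist_triangle a (g b) b
      have := hTsep ha hb hne
      linarith
  refine ⟨hTfin.toFinset, ?_, by simpa [Set.Finite.mem_toFinset] using hcov⟩
  set Tf := hTfin.toFinset with hTf
  have hmem : ∀ a, a ∈ Tf ↔ a ∈ T := fun a => Set.Finite.mem_toFinset hTfin
  have h0 : (0:ℝ) ≤ (μH[1] K).toReal := ENNReal.toReal_nonneg
  rcases le_or_gt Tf.card 1 with hc | hc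
  · calc (Tf.card : ℝ) ≤ 1 := by exact_mod_cast hc
      _ ≤ 6 * (μH[1] K).toReal + 1 := by linarith
  -- at least two points: measure bound
  · have hball : ∀ a ∈ Tf, ENNReal.ofReal (1/2) ≤ μH[1] (K ∩ ball a (1/2)) := by
      intro a ha
      obtain ⟨b, hb, hba⟩ := Finset.exists_mem_ne hc a
      have hsep := hTsep ((hmem b).mp hb) ((hmem a).mp ha) hba
      exact measure_ball_inter_ge K hK (hTK ((hmem a).mp ha)) (hTK ((hmem b).mp hb))
        (by norm_num) (by linarith)
    have hdisj : (↑Tf : Set ℂ).PairwiseDisjoint (fun a => K ∩ ball a (1/2)) := by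
      intro a ha b hb hab
      have hsep := hTsep ((hmem a).mp (by simpa using ha)) ((hmem b).mp (by simpa using hb)) hab
      refine Set.disjoint_left.mpr fun z ⟨_, hza⟩ ⟨_, hzb⟩ => ?_
      have : dist a b ≤ dist z a + dist z b := dist_triangle_left a b z
      rw [mem_ball] at hza hzb
      linarith
    have hunion : ∑ a ∈ Tf, μH[1] (K ∩ ball a (1/2)) ≤ μH[1] K := by
      rw [← measure_biUnion_finset hdisj fun a _ => hKmeas.inter measurableSet_ball]
      exact measure_mono (Set.iUnion₂_subset fun a _ => Set.inter_subset_left)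
    have hsum : (Tf.card : ℝ≥0∞) * ENNReal.ofReal (1/2) ≤ μH[1] K := by
      have h1 : ∑ _a ∈ Tf, ENNReal.ofReal (1/2) ≤ ∑ a ∈ Tf, μH[1] (K ∩ ball a (1/2)) :=
        Finset.sum_le_sum hball
      rw [Finset.sum_const, nsmul_eq_mul] at h1
      exact h1.trans hunion
    have := ENNReal.toReal_mono hKm.ne hsum
    rw [ENNReal.toReal_mul, ENNReal.toReal_ofReal (by norm_num : (0:ℝ) ≤ 1/2)] at this
    rw [ENNReal.toReal_natCast] at this
    linarith

/-- If a compact set `F ⊆ ℂ` consists of `M` connected components and has finite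
one-dimensional Hausdorff measure, then `F` can be covered by at most `M·(6·m₁(F) + 1)`
closed discs of radius 1. -/
theorem stmt1 (F : Set ℂ) (hFc : IsCompact F) (hFm : μH[1] F < ⊤)
    (M : ℕ) (c : Fin M → Set ℂ)
    (hcover : F = ⋃ i, c i)
    (hcomp : ∀ i, ∃ x ∈ F, c i = connectedComponentIn F x) :
    ∃ S : Finset ℂ, (S.card : ℝ) ≤ M * (6 * (μH[1] F).toReal + 1) ∧
      F ⊆ ⋃ z ∈ S, closedBall z 1 := by
  classical
  haveI : CompactSpace F := isCompact_iff_compactSpace.mp hFc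
  have hsub : ∀ i, c i ⊆ F := by
    intro i
    obtain ⟨x, hx, hcx⟩ := hcomp i
    rw [hcx]
    exact connectedComponentIn_subset F x
  have hcpt : ∀ i, IsCompact (c i) := by
    intro i
    obtain ⟨x, hx, hcx⟩ := hcomp i
    rw [hcx, connectedComponentIn_eq_image hx]
    exact (isClosed_connectedComponent.isCompact).image continuous_subtype_val
  have hpre : ∀ i, IsPreconnected (c i) := by
    intro i
    obtain ⟨x, hx, hcx⟩ := hcomp i
    rw [hcx]
    exact isPreconnected_connectedComponentIn
  have hT : ∀ i : Fin M, ∃ T : Finset ℂ, (T.card : ℝ) ≤ 6 * (μH[1] (c i)).toReal + 1 ∧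
      c i ⊆ ⋃ z ∈ T, closedBall z 1 := fun i =>
    component_cover (c i) (hcpt i) (hpre i) (hcpt i).measurableSet
      (lt_of_le_of_lt (measure_mono (hsub i)) hFm)
  choose T hTcard hTcov using hT
  refine ⟨Finset.univ.biUnion T, ?_, ?_⟩
  · calc ((Finset.univ.biUnion T).card : ℝ)
        ≤ ((∑ i : Fin M, (T i).card : ℕ) : ℝ) := by exact_mod_cast Finset.card_biUnion_le
      _ = ∑ i : Fin M, ((T i).card : ℝ) := by push_cast; ring
      _ ≤ ∑ _i : Fin M, (6 * (μH[1] F).toReal + 1) := by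
          apply Finset.sum_le_sum
          intro i _
          refine le_trans (hTcard i) ?_
          have : (μH[1] (c i)).toReal ≤ (μH[1] F).toReal :=
            ENNReal.toReal_mono hFm.ne (measure_mono (hsub i))
          linarith
      _ = M * (6 * (μH[1] F).toReal + 1) := by
          rw [Finset.sum_const, Finset.card_univ, Fintype.card_fin, nsmul_eq_mul]
  · rw [hcover]
    intro z hz
    obtain ⟨i, hi⟩ := Set.mem_iUnion.mp hz
    obtain ⟨t, ht⟩ := Set.mem_iUnion₂.mp (hTcov i hi)
    exact Set.mem_iUnion₂.mpr ⟨t, Finset.mem_biUnion.mpr ⟨i, Finset.mem_univ i, ht.1⟩, ht.2⟩
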